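/- Let G = Aff(ℤ/2kℤ) with k odd and K₀ the even-translation subgroup. If L ≤ G with L ∩ K₀ = 1 and L ⊄ K₀, then |L| = 2 and the nontrivial element of L is a quasipolarity (a fixed-point-free involution); hence |𝒬 ∩ L| = 1 where 𝒬 is the set of quasipolarities. -/

import Mathlib

attribute [local instance] Classical.propDecidable


open Pointwise

def affPerm (n : ℕ) (u : ZMod n) (v : (ZMod n)ˣ) : Equiv.Perm (ZMod n) where
  toFun x := v * x + u
  invFun x := (v⁻¹ : (ZMod n)ˣ) * (x - u)
  left_inv x := by simp
  right_inv x := by simp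

def Aff (n : ℕ) : Subgroup (Equiv.Perm (ZMod n)) where
  carrier := {σ | ∃ u v, σ = affPerm n u v}
  one_mem' := ⟨0, 1, Equiv.ext fun x => by simp [affPerm]⟩
  mul_mem' := by
    rintro σ τ ⟨u1, v1, rfl⟩ ⟨u2, v2, rfl⟩
    exact ⟨v1 * u2 + u1, v1 * v2, Equiv.ext fun x => by
      simp [affPerm, Equiv.Perm.mul_apply, mul_add, mul_assoc, add_assoc]⟩
  inv_mem' := by
    rintro σ ⟨u, v, rfl⟩
    refine ⟨-(↑v⁻¹ * u), v⁻¹, Equiv.ext fun x => ?_⟩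
    simp [affPerm, Equiv.Perm.inv_def, Equiv.symm, mul_sub, sub_eq_add_neg, mul_add, mul_neg]

def AffK0 (n : ℕ) : Subgroup (Equiv.Perm (ZMod n)) where
  carrier := {σ | ∃ u v, Even u ∧ σ = affPerm n u v}
  one_mem' := ⟨0, 1, Even.zero, Equiv.ext fun x => by simp [affPerm]⟩
  mul_mem' := by
    rintro σ τ ⟨u1, v1, hu1, rfl⟩ ⟨u2, v2, hu2, rfl⟩
    exact ⟨v1 * u2 + u1, v1 * v2, (hu2.mul_left _).add hu1, Equiv.ext fun x => by
      simp [affPerm, Equiv.Perm.mul_apply, mul_add, mul_assoc, add_assoc]⟩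
  inv_mem' := by
    rintro σ ⟨u, v, hu, rfl⟩
    refine ⟨-(↑v⁻¹ * u), v⁻¹, (hu.mul_left _).neg, Equiv.ext fun x => ?_⟩
    simp [affPerm, Equiv.Perm.inv_def, Equiv.symm, mul_sub, sub_eq_add_neg, mul_add, mul_neg]

noncomputable def phi (k : ℕ) : ZMod (2*k) →+* ZMod 2 := ZMod.castHom (dvd_mul_right 2 k) (ZMod 2)

lemma zmod2_cases : ∀ x : ZMod 2, x = 0 ∨ x = 1 := by decide

lemma even_iff_phi (k : ℕ) [NeZero (2*k)] (u : ZMod (2*k)) :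
    Even u ↔ phi k u = 0 := by
  constructor
  · rintro ⟨r, rfl⟩
    rw [map_add]
    rcases zmod2_cases (phi k r) with h | h <;> rw [h] <;> decide
  · intro h
    have h2 : ((u.val : ℕ) : ZMod 2) = 0 := by
      rw [ZMod.natCast_val]; simpa [phi, ZMod.castHom_apply] using h
    obtain ⟨m, hm⟩ := (ZMod.natCast_eq_zero_iff _ _).1 h2
    refine ⟨(m : ZMod (2*k)), ?_⟩
    have hu : ((u.val : ℕ) : ZMod (2*k)) = u := by
      rw [ZMod.natCast_val, ZMod.cast_id]
    rw [← hu, hm]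
    push_cast
    ring

lemma phi_unit (k : ℕ) (v : (ZMod (2*k))ˣ) : phi k (v : ZMod (2*k)) = 1 := by
  haveI : Fact (Nat.Prime 2) := ⟨Nat.prime_two⟩
  have hU := (phi k).isUnit_map v.isUnit
  rcases zmod2_cases (phi k v) with h | h
  · rw [h] at hU; exact absurd hU (by simp)
  · exact h

lemma phi_affPerm (k : ℕ) (u : ZMod (2*k)) (v : (ZMod (2*k))ˣ) (x : ZMod (2*k)) :
    phi k (affPerm (2*k) u v x) = phi k x + phi k u := by
  show phi k ((v : ZMod (2*k)) * x + u) = _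
  rw [map_add, map_mul, phi_unit, one_mul]

lemma mem_K0_iff (k : ℕ) [NeZero (2*k)] (σ : ↥(Aff (2*k))) :
    σ ∈ (AffK0 (2*k)).subgroupOf (Aff (2*k)) ↔
      phi k ((σ : Equiv.Perm (ZMod (2*k))) 0) = 0 := by
  rw [Subgroup.mem_subgroupOf]
  constructor
  · rintro ⟨u, v, hu, hσ⟩
    have h0 : (σ : Equiv.Perm (ZMod (2*k))) 0 = u := by
      rw [hσ]; show (v : ZMod (2*k)) * 0 + u = u; ring
    rw [h0]; exact (even_iff_phi k u).1 hu
  · intro h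
    obtain ⟨u, v, hσ⟩ := σ.2
    have h0 : (σ : Equiv.Perm (ZMod (2*k))) 0 = u := by
      rw [hσ]; show (v : ZMod (2*k)) * 0 + u = u; ring
    exact ⟨u, v, (even_iff_phi k u).2 (h0 ▸ h), hσ⟩

/-- For `k` odd and `L ≤ Aff(ℤ/2kℤ)` with `L ∩ K₀ = 1` and `L ⊄ K₀`, `L` has order `2`,
its nontrivial element is a quasipolarity, and `L` contains exactly one quasipolarity. -/
theorem stmt_17 (k : ℕ) (hk : Odd k) (hk0 : 0 < k) [NeZero (2 * k)]
    (L : Subgroup ↥(Aff (2 * k)))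
    (h1 : L ⊓ (AffK0 (2 * k)).subgroupOf (Aff (2 * k)) = ⊥)
    (h2 : ¬ L ≤ (AffK0 (2 * k)).subgroupOf (Aff (2 * k))) :
    Nat.card L = 2 ∧
      (∀ q ∈ L, q ≠ 1 → q ^ 2 = 1 ∧ ∀ x : ZMod (2 * k), q • x ≠ x) ∧
      (∃! q : ↥(Aff (2 * k)), q ∈ L ∧ q ^ 2 = 1 ∧ ∀ x : ZMod (2 * k), q • x ≠ x) := by
  set K := (AffK0 (2 * k)).subgroupOf (Aff (2 * k)) with hK
  -- trivial intersection
  have hbot : ∀ g ∈ L, g ∈ K → g = 1 := by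
    intro g hg hgK
    have : g ∈ L ⊓ K := ⟨hg, hgK⟩
    rw [h1] at this
    exact this
  -- phi of translation part for members of L \ K
  have hodd : ∀ g : ↥(Aff (2*k)), g ∉ K →
      phi k ((g : Equiv.Perm (ZMod (2*k))) 0) = 1 := by
    intro g hg
    rcases zmod2_cases (phi k ((g : Equiv.Perm (ZMod (2*k))) 0)) with h | h
    · exact absurd ((mem_K0_iff k g).2 h) hg
    · exact h
  -- phi semilinearity for any element of Aff
  have hphi_app : ∀ (g : ↥(Aff (2*k))) (x : ZMod (2*k)),
      phi k ((g : Equiv.Perm (ZMod (2*k))) x)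
        = phi k x + phi k ((g : Equiv.Perm (ZMod (2*k))) 0) := by
    intro g x
    obtain ⟨u, v, hg⟩ := g.2
    have h0 : (g : Equiv.Perm (ZMod (2*k))) 0 = u := by
      rw [hg]; show (v : ZMod (2*k)) * 0 + u = u; ring
    rw [h0, hg, phi_affPerm]
  -- squares of elements outside K are trivial
  have hsq : ∀ g ∈ L, g ∉ K → g * g = 1 := by
    intro g hg hgK
    refine hbot _ (mul_mem hg hg) ?_
    rw [mem_K0_iff]
    have : ((g * g : ↥(Aff (2*k))) : Equiv.Perm (ZMod (2*k))) 0
        = (g : Equiv.Perm (ZMod (2*k))) ((g : Equiv.Perm (ZMod (2*k))) 0) := rfl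
    rw [this, hphi_app, hodd g hgK]
    decide
  obtain ⟨q, hqL, hqK⟩ := SetLike.not_le_iff_exists.1 h2
  have hq1 : q ≠ 1 := fun h => hqK (h ▸ one_mem K)
  have hq2 : q * q = 1 := hsq q hqL hqK
  -- every element of L is 1 or q
  have hcases : ∀ g ∈ L, g = 1 ∨ g = q := by
    intro g hg
    by_cases hgK : g ∈ K
    · exact Or.inl (hbot g hg hgK)
    · right
      have hmul : g * q = 1 := by
        refine hbot _ (mul_mem hg hqL) ?_
        rw [mem_K0_iff]
        have : ((g * q : ↥(Aff (2*k))) : Equiv.Perm (ZMod (2*k))) 0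
            = (g : Equiv.Perm (ZMod (2*k))) ((q : Equiv.Perm (ZMod (2*k))) 0) := rfl
        rw [this, hphi_app, hodd g hgK, hodd q hqK]
        decide
      exact (eq_inv_of_mul_eq_one_left hmul).trans (inv_eq_of_mul_eq_one_left hq2)
  -- fixed point freeness
  have hfpf : ∀ g ∈ L, g ≠ 1 → ∀ x : ZMod (2*k), g • x ≠ x := by
    intro g hg hg1 x hx
    have hgK : g ∉ K := fun h => hg1 (hbot g hg h)
    have hx' : (g : Equiv.Perm (ZMod (2*k))) x = x := hx
    have := hphi_app g x
    rw [hx', hodd g hgK] at this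
    have : (1 : ZMod 2) = 0 := by
      have h01 := add_left_cancel (a := phi k x) (b := (1:ZMod 2)) (c := 0)
        (by rw [add_zero]; exact this.symm)
      exact h01
    exact absurd this (by decide)
  refine ⟨?_, ?_, ?_⟩
  · -- cardinality
    rw [Nat.card_eq_two_iff]
    refine ⟨(1 : L), ⟨q, hqL⟩, ?_, ?_⟩
    · exact fun h => hq1 (congrArg Subtype.val h).symm
    · ext g
      simp only [Set.mem_insert_iff, Set.mem_singleton_iff, Set.mem_univ, iff_true]
      rcases hcases g.1 g.2 with h | h
      · exact Or.inl (Subtype.ext h)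
      · exact Or.inr (Subtype.ext h)
  · intro g hg hg1
    have hgK : g ∉ K := fun h => hg1 (hbot g hg h)
    exact ⟨by rw [pow_two]; exact hsq g hg hgK, hfpf g hg hg1⟩
  · refine ⟨q, ⟨hqL, by rw [pow_two]; exact hq2, hfpf q hqL hq1⟩, ?_⟩
    rintro y ⟨hyL, -, hyfpf⟩
    rcases hcases y hyL with h | h
    · exact absurd (by rw [h]; exact one_smul _ (0 : ZMod (2*k))) (hyfpf 0)
    · exact h
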